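/- Let M be a real d×d matrix with spectral radius of |M| strictly less than 1, let φ : ℝ → ℝ be componentwise non-expansive, let v ∈ ℝ^d, and define x₀ = 0, x_{t+1} = φ(M x_t + v) entrywise. Then the matrix I − |M| is invertible, and for all integers n > m ≥ 1 the entrywise inequality |x_n − x_m| ≤ |M|^m (I − |M|)^{−1} |x_1 − x_0| holds, where |x| denotes the entrywise absolute value of the vector x. -/

import Mathlib

open Matrix

/-- The spectral radius of a real square matrix: the supremum of the moduli of its
complex eigenvalues (elements of the spectrum of the matrix viewed over `ℂ`). -/
noncomputable def specRad {ι : Type*} [Fintype ι] [DecidableEq ι]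
    (M : Matrix ι ι ℝ) : ENNReal :=
  spectralRadius ℂ (M.map Complex.ofReal)

open Filter in
section
attribute [local instance] Matrix.linftyOpNormedRing Matrix.linftyOpNormedAlgebra

lemma aux_pow_tendsto_zero {d : ℕ} (A : Matrix (Fin d) (Fin d) ℝ)
    (hρ : spectralRadius ℂ (A.map Complex.ofReal) < 1) (i j : Fin d) :
    Tendsto (fun n : ℕ => (A ^ n) i j) atTop (nhds 0) := by
  have : CompleteSpace (Matrix (Fin d) (Fin d) ℂ) := FiniteDimensional.complete ℂ _
  set Ac := A.map Complex.ofReal with hAc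
  have hg := spectrum.pow_nnnorm_pow_one_div_tendsto_nhds_spectralRadius Ac
  obtain ⟨r, hρr, hr1⟩ := ENNReal.lt_iff_exists_nnreal_btwn.mp hρ
  have hev : ∀ᶠ n : ℕ in atTop, (‖Ac ^ n‖₊ : ENNReal) ^ (1 / n : ℝ) < r :=
    hg.eventually_lt_const hρr
  have hev2 : ∀ᶠ n : ℕ in atTop, ‖Ac ^ n‖ ≤ (r : ℝ) ^ n := by
    filter_upwards [hev, eventually_ge_atTop 1] with n hn hn1
    have hn0 : (n : ℝ) ≠ 0 := by exact_mod_cast Nat.one_le_iff_ne_zero.mp hn1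
    have h1 : ((‖Ac ^ n‖₊ : ENNReal) ^ (1 / (n : ℝ))) ^ (n : ℝ) ≤ (r : ENNReal) ^ (n : ℝ) :=
      ENNReal.rpow_le_rpow hn.le (Nat.cast_nonneg n)
    rw [← ENNReal.rpow_mul, one_div, inv_mul_cancel₀ hn0, ENNReal.rpow_one,
      ENNReal.rpow_natCast, ← ENNReal.coe_pow, ENNReal.coe_le_coe] at h1
    exact_mod_cast h1
  have hnorm : Tendsto (fun n : ℕ => ‖Ac ^ n‖) atTop (nhds 0) := by
    refine squeeze_zero' (by filter_upwards with n using norm_nonneg _) hev2 ?_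
    exact tendsto_pow_atTop_nhds_zero_of_lt_one (by positivity) (by exact_mod_cast hr1)
  have hentry : ∀ n : ℕ, |(A ^ n) i j| ≤ ‖Ac ^ n‖ := by
    intro n
    have hmap : Ac ^ n = (A ^ n).map Complex.ofReal := by
      rw [hAc]
      exact ((Complex.ofRealHom.mapMatrix : Matrix (Fin d) (Fin d) ℝ →+* _).map_pow A n).symm
    have h0 : (Ac ^ n) i j = ((A ^ n) i j : ℂ) := by rw [hmap]; rfl
    have h1 : ‖(Ac ^ n) i j‖₊ ≤ ‖Ac ^ n‖₊ := by
      rw [Matrix.linfty_opNNNorm_def]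
      refine le_trans ?_ (Finset.le_sup (Finset.mem_univ i))
      exact Finset.single_le_sum (f := fun k => ‖(Ac ^ n) i k‖₊) (fun _ _ => zero_le)
        (Finset.mem_univ j)
    have h2 : ‖(Ac ^ n) i j‖ ≤ ‖Ac ^ n‖ := h1
    rw [h0, Complex.norm_real, Real.norm_eq_abs] at h2
    exact h2
  exact squeeze_zero_norm hentry hnorm

lemma aux_isUnit_one_sub_det {d : ℕ} (A : Matrix (Fin d) (Fin d) ℝ)
    (hρ : spectralRadius ℂ (A.map Complex.ofReal) < 1) :
    IsUnit ((1 : Matrix (Fin d) (Fin d) ℝ) - A).det := by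
  set Ac := A.map Complex.ofReal with hAc
  have h1 : (1 : ℂ) ∉ spectrum ℂ Ac := by
    intro hmem
    have : (1 : ENNReal) ≤ spectralRadius ℂ Ac := by
      rw [spectralRadius]
      have := le_iSup₂ (f := fun k (_ : k ∈ spectrum ℂ Ac) => (‖k‖₊ : ENNReal)) (1 : ℂ) hmem
      simpa using this
    exact absurd hρ (not_lt.mpr this)
  rw [spectrum.notMem_iff] at h1
  have h2 : IsUnit ((1 : Matrix (Fin d) (Fin d) ℂ) - Ac) := by simpa using h1
  have h3 : ((1 : Matrix (Fin d) (Fin d) ℂ) - Ac) = Complex.ofRealHom.mapMatrix (1 - A) := by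
    rw [map_sub, _root_.map_one, RingHom.mapMatrix_apply]; rfl
  rw [h3] at h2
  have h4 := (Matrix.isUnit_iff_isUnit_det _).mp h2
  rw [← RingHom.map_det] at h4
  have h5 : ((1 - A).det : ℂ) ≠ 0 := h4.ne_zero
  exact isUnit_iff_ne_zero.mpr (by exact_mod_cast h5)
end

open Filter in
lemma aux_geom_sum_le_inv {d : ℕ} (A : Matrix (Fin d) (Fin d) ℝ)
    (hA : ∀ i j, 0 ≤ A i j)
    (hdet : IsUnit ((1 : Matrix (Fin d) (Fin d) ℝ) - A).det)
    (hpow0 : ∀ i j, Tendsto (fun n : ℕ => (A ^ n) i j) atTop (nhds 0)) :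
    ∀ N (i j : Fin d), (∑ k ∈ Finset.range N, A ^ k) i j ≤ (1 - A)⁻¹ i j := by
  have hpow : ∀ (k : ℕ) (i j : Fin d), 0 ≤ (A ^ k) i j := by
    intro k
    induction k with
    | zero =>
      intro i j
      rw [pow_zero, Matrix.one_apply]
      split <;> norm_num
    | succ k ih =>
      intro i j
      rw [pow_succ, Matrix.mul_apply]
      exact Finset.sum_nonneg fun p _ => mul_nonneg (ih i p) (hA p j)
  have hid : ∀ N : ℕ, (∑ k ∈ Finset.range N, A ^ k) =
      (1 - A)⁻¹ - A ^ N * (1 - A)⁻¹ := by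
    intro N
    have h1 : (∑ k ∈ Finset.range N, A ^ k) * (1 - A) = 1 - A ^ N := by
      have h := geom_sum_mul A N
      calc (∑ k ∈ Finset.range N, A ^ k) * (1 - A)
          = -((∑ k ∈ Finset.range N, A ^ k) * (A - 1)) := by rw [← mul_neg, neg_sub]
        _ = -(A ^ N - 1) := by rw [h]
        _ = 1 - A ^ N := by rw [neg_sub]
    have h3 := congrArg (· * (1 - A)⁻¹) h1
    rw [mul_assoc, Matrix.mul_nonsing_inv _ hdet, mul_one, sub_mul, one_mul] at h3
    exact h3
  have hmul_entry : ∀ (N : ℕ) (i j : Fin d), (A ^ N * (1 - A)⁻¹) i j =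
      ∑ p, (A ^ N) i p * (1 - A)⁻¹ p j := fun N i j => Matrix.mul_apply
  have hBnn : ∀ i j, 0 ≤ (1 - A)⁻¹ i j := by
    intro i j
    have ht : Tendsto (fun N : ℕ => (∑ k ∈ Finset.range N, A ^ k) i j) atTop
        (nhds ((1 - A)⁻¹ i j)) := by
      have heq : ∀ N : ℕ, (∑ k ∈ Finset.range N, A ^ k) i j =
          (1 - A)⁻¹ i j - (A ^ N * (1 - A)⁻¹) i j := by
        intro N; rw [hid N, Matrix.sub_apply]
      simp only [heq]
      have h0 : Tendsto (fun N : ℕ => (A ^ N * (1 - A)⁻¹) i j) atTop (nhds 0) := by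
        simp only [hmul_entry]
        have : Tendsto (fun N : ℕ => ∑ p, (A ^ N) i p * (1 - A)⁻¹ p j) atTop
            (nhds (∑ p : Fin d, 0 * (1 - A)⁻¹ p j)) :=
          tendsto_finset_sum _ fun p _ => (hpow0 i p).mul tendsto_const_nhds
        simpa using this
      simpa using tendsto_const_nhds.sub h0
    refine ge_of_tendsto ht (Eventually.of_forall fun N => ?_)
    rw [Matrix.sum_apply]
    exact Finset.sum_nonneg fun k _ => hpow k i j
  intro N i j
  have hkey : (1 - A)⁻¹ i j - (∑ k ∈ Finset.range N, A ^ k) i j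
      = (A ^ N * (1 - A)⁻¹) i j := by
    rw [hid N, Matrix.sub_apply]; ring
  have hnn : 0 ≤ (A ^ N * (1 - A)⁻¹) i j := by
    rw [hmul_entry]
    exact Finset.sum_nonneg fun p _ => mul_nonneg (hpow N i p) (hBnn p j)
  linarith

theorem stmt_2 {d : ℕ} (M : Matrix (Fin d) (Fin d) ℝ)
    (hρ : specRad (M.map fun a => |a|) < 1)
    (φ : ℝ → ℝ) (hφ : ∀ a b : ℝ, |φ a - φ b| ≤ |a - b|)
    (v : Fin d → ℝ)
    (x : ℕ → Fin d → ℝ)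
    (hx0 : x 0 = 0)
    (hxs : ∀ t, x (t + 1) = fun i => φ ((M.mulVec (x t) + v) i)) :
    IsUnit (1 - M.map fun a => |a|) ∧
      ∀ n m : ℕ, 1 ≤ m → m < n → ∀ i : Fin d,
        |x n i - x m i| ≤
          (((M.map fun a => |a|) ^ m * (1 - M.map fun a => |a|)⁻¹).mulVec
            fun j => |x 1 j - x 0 j|) i := by
  set A : Matrix (Fin d) (Fin d) ℝ := M.map fun a => |a| with hAdef
  have hρ' : spectralRadius ℂ (A.map Complex.ofReal) < 1 := hρ
  have hA : ∀ i j, 0 ≤ A i j := fun i j => abs_nonneg _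
  have hdet := aux_isUnit_one_sub_det A hρ'
  have hUnit : IsUnit (1 - A) := (Matrix.isUnit_iff_isUnit_det _).mpr hdet
  refine ⟨hUnit, ?_⟩
  set w : Fin d → ℝ := fun j => |x 1 j - x 0 j| with hwdef
  have hw : ∀ j, 0 ≤ w j := fun j => abs_nonneg _
  have hpow : ∀ (k : ℕ) (i j : Fin d), 0 ≤ (A ^ k) i j := by
    intro k
    induction k with
    | zero =>
      intro i j
      rw [pow_zero, Matrix.one_apply]
      split <;> norm_num
    | succ k ih =>
      intro i j
      rw [pow_succ, Matrix.mul_apply]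
      exact Finset.sum_nonneg fun p _ => mul_nonneg (ih i p) (hA p j)
  have hmv : ∀ (B : Matrix (Fin d) (Fin d) ℝ) (y : Fin d → ℝ) (i : Fin d),
      B.mulVec y i = ∑ j, B i j * y j := fun B y i => rfl
  -- step bound
  have hstep : ∀ (t : ℕ) (i : Fin d), |x (t + 1) i - x t i| ≤ (A ^ t).mulVec w i := by
    intro t
    induction t with
    | zero =>
      intro i
      rw [pow_zero, Matrix.one_mulVec]
    | succ t ih =>
      intro i
      have e1 : x (t + 2) i = φ ((M.mulVec (x (t + 1)) + v) i) := congrFun (hxs (t + 1)) i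
      have e2 : x (t + 1) i = φ ((M.mulVec (x t) + v) i) := congrFun (hxs t) i
      rw [e1, e2]
      calc |φ ((M.mulVec (x (t + 1)) + v) i) - φ ((M.mulVec (x t) + v) i)|
          ≤ |(M.mulVec (x (t + 1)) + v) i - (M.mulVec (x t) + v) i| := hφ _ _
        _ = |∑ j, M i j * (x (t + 1) j - x t j)| := by
            simp only [Pi.add_apply, hmv]
            rw [add_sub_add_right_eq_sub, ← Finset.sum_sub_distrib]
            congr 1
            exact Finset.sum_congr rfl fun j _ => (mul_sub _ _ _).symm
        _ ≤ ∑ j, |M i j| * |x (t + 1) j - x t j| := by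
            refine (Finset.abs_sum_le_sum_abs _ _).trans ?_
            exact le_of_eq (Finset.sum_congr rfl fun j _ => abs_mul _ _)
        _ ≤ ∑ j, A i j * (A ^ t).mulVec w j := by
            refine Finset.sum_le_sum fun j _ => ?_
            exact mul_le_mul_of_nonneg_left (ih j) (hA i j)
        _ = (A ^ (t + 1)).mulVec w i := by
            rw [pow_succ', ← Matrix.mulVec_mulVec, hmv A]
  -- telescoping
  have htel : ∀ m n : ℕ, m ≤ n → ∀ i : Fin d,
      |x n i - x m i| ≤ ∑ k ∈ Finset.Ico m n, (A ^ k).mulVec w i := by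
    intro m n hmn
    induction n, hmn using Nat.le_induction with
    | base => intro i; simp
    | succ n hmn ih =>
      intro i
      have h1 : |x (n + 1) i - x m i| ≤ |x (n + 1) i - x n i| + |x n i - x m i| := by
        have := abs_sub_le (x (n + 1) i) (x n i) (x m i)
        simpa using this
      rw [Finset.sum_Ico_succ_top hmn]
      calc |x (n + 1) i - x m i| ≤ |x (n + 1) i - x n i| + |x n i - x m i| := h1
        _ ≤ (A ^ n).mulVec w i + ∑ k ∈ Finset.Ico m n, (A ^ k).mulVec w i :=
            add_le_add (hstep n i) (ih i)
        _ = (∑ k ∈ Finset.Ico m n, (A ^ k).mulVec w i) + (A ^ n).mulVec w i := by ring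
  have hSB := aux_geom_sum_le_inv A hA hdet (aux_pow_tendsto_zero A hρ')
  intro n m hm hmn i
  refine (htel m n hmn.le i).trans ?_
  have hL : ∑ k ∈ Finset.Ico m n, (A ^ k).mulVec w i
      = ∑ p, (A ^ m) i p * ∑ j ∈ Finset.range (n - m), ((A ^ j).mulVec w) p := by
    rw [Finset.sum_Ico_eq_sum_range]
    have h1 : ∀ j : ℕ, (A ^ (m + j)).mulVec w i
        = ∑ p, (A ^ m) i p * ((A ^ j).mulVec w) p := by
      intro j
      rw [pow_add, ← Matrix.mulVec_mulVec, hmv]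
    simp only [h1]
    rw [Finset.sum_comm]
    exact Finset.sum_congr rfl fun p _ => (Finset.mul_sum _ _ _).symm
  have hR : ((A ^ m * (1 - A)⁻¹).mulVec w) i
      = ∑ p, (A ^ m) i p * ((1 - A)⁻¹.mulVec w) p := by
    rw [← Matrix.mulVec_mulVec, hmv]
  rw [hL, hR]
  refine Finset.sum_le_sum fun p _ => ?_
  refine mul_le_mul_of_nonneg_left ?_ (hpow m i p)
  have h2 : ∑ j ∈ Finset.range (n - m), ((A ^ j).mulVec w) p
      = ∑ q, (∑ j ∈ Finset.range (n - m), A ^ j) p q * w q := by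
    simp only [hmv]
    rw [Finset.sum_comm]
    refine Finset.sum_congr rfl fun q _ => ?_
    rw [Matrix.sum_apply, Finset.sum_mul]
  rw [h2, hmv]
  exact Finset.sum_le_sum fun q _ => mul_le_mul_of_nonneg_right (hSB (n - m) p q) (hw q)
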